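/- Let μ > 0, n ∈ ℕ with n > 1, and f ∈ C([0,1]). Then sup_{x ∈ [0,1]} |𝓛ₙᴷ(f, x) − f(x)| ≤ ω(f_μ, 1/√(n+1)) · ln(2+μ) · (1 + 1/(2√(n+1)) + √2) + ω(f_μ, γ_n) · ln(2+μ), where γ_n := max_{x ∈ [0,1]} |a_{n+1}(x) − x|. -/

import Mathlib

open MeasureTheory Filter Set

/-- The logarithmic weight `ln_μ(x) = ln(1+μ+x)`. -/
noncomputable def lnMu (μ x : ℝ) : ℝ := Real.log (1 + μ + x)

/-- The function `a_{n+1}(x)` from the paper. -/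
noncomputable def aFun (μ : ℝ) (n : ℕ) (x : ℝ) : ℝ :=
  Real.log (1 + x / (((n : ℝ) + 1) * (1 + μ))) /
    Real.log (1 + 1 / (((n : ℝ) + 1) * (1 + μ)))

/-- Bernstein basis polynomial `p_{n,k}(x) = C(n,k) x^k (1-x)^{n-k}`. -/
noncomputable def bern (n k : ℕ) (x : ℝ) : ℝ :=
  (n.choose k : ℝ) * x ^ k * (1 - x) ^ (n - k)

/-- The Kantorovich logarithmic operator `𝓛ₙᴷ(f,x)`. -/
noncomputable def LK (μ : ℝ) (n : ℕ) (f : ℝ → ℝ) (x : ℝ) : ℝ :=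
  lnMu μ x * ∑ k ∈ Finset.range (n + 1),
    bern n k (aFun μ n x) * ((n : ℝ) + 1) *
      ∫ t in ((k : ℝ) / ((n : ℝ) + 1))..(((k : ℝ) + 1) / ((n : ℝ) + 1)), f t / lnMu μ t

/-- `γ_n := max_{x ∈ [0,1]} |a_{n+1}(x) - x|`. -/
noncomputable def gammaN (μ : ℝ) (n : ℕ) : ℝ :=
  ⨆ x : Set.Icc (0 : ℝ) 1, |aFun μ n (x : ℝ) - (x : ℝ)|

/-- Unweighted L^p norm `(∫₀¹ |f|^p)^(1/p)` on [0,1]. -/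
noncomputable def normP (p : ℝ) (f : ℝ → ℝ) : ℝ :=
  (∫ x in (0:ℝ)..1, |f x| ^ p) ^ (1 / p)

/-- Weighted L^p norm `(∫₀¹ |f/ln_μ|^p)^(1/p)` on [0,1]. -/
noncomputable def normPMu (μ p : ℝ) (f : ℝ → ℝ) : ℝ :=
  (∫ x in (0:ℝ)..1, |f x / lnMu μ x| ^ p) ^ (1 / p)

/-- Modulus of continuity on `[0,1]`. -/
noncomputable def omegaMod (g : ℝ → ℝ) (δ : ℝ) : ℝ :=
  sSup {v | ∃ x ∈ Set.Icc (0:ℝ) 1, ∃ t ∈ Set.Icc (0:ℝ) 1, |t - x| ≤ δ ∧ v = |g t - g x|}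

/-! ### Auxiliary lemmas -/

lemma bern_eq_eval (n k : ℕ) (y : ℝ) :
    bern n k y = (bernsteinPolynomial ℝ n k).eval y := by
  simp [bern, bernsteinPolynomial]

lemma bern_sum (n : ℕ) (y : ℝ) : ∑ k ∈ Finset.range (n+1), bern n k y = 1 := by
  simp only [bern_eq_eval, ← Polynomial.eval_finset_sum]
  rw [bernsteinPolynomial.sum]; simp

lemma bern_sum_k (n : ℕ) (y : ℝ) :
    ∑ k ∈ Finset.range (n+1), (k : ℝ) * bern n k y = n * y := by
  have := congrArg (Polynomial.eval y) (bernsteinPolynomial.sum_smul ℝ n)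
  simpa [Polynomial.eval_finset_sum, bern_eq_eval, mul_comm] using this

lemma bern_sum_k2 (n : ℕ) (hn : 1 ≤ n) (y : ℝ) :
    ∑ k ∈ Finset.range (n+1), (k : ℝ)^2 * bern n k y = (n:ℝ)*((n:ℝ)-1) * y^2 + n * y := by
  have h1 := congrArg (Polynomial.eval y) (bernsteinPolynomial.sum_mul_smul ℝ n)
  simp only [Polynomial.eval_finset_sum, Polynomial.eval_smul, smul_eq_mul,
    Polynomial.eval_mul, Polynomial.eval_pow, Polynomial.eval_X, nsmul_eq_mul,
    Polynomial.eval_natCast, Nat.cast_mul] at h1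
  rw [Nat.cast_sub hn] at h1
  push_cast at h1
  have h2 := bern_sum_k n y
  have key : ∀ k : ℕ, (k : ℝ)^2 * bern n k y
      = (k:ℝ) * ((k:ℝ) - 1) * bern n k y + (k:ℝ) * bern n k y := by intro k; ring
  have cast1 : ∀ k : ℕ, ((k - 1 : ℕ) : ℝ) * (k:ℝ) = ((k:ℝ) - 1) * k := by
    intro k
    cases k with
    | zero => simp
    | succ m => push_cast [Nat.succ_sub_one]; ring
  calc ∑ k ∈ Finset.range (n+1), (k : ℝ)^2 * bern n k y
      = (∑ k ∈ Finset.range (n+1), (k:ℝ) * ((k:ℝ)-1) * bern n k y)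
        + ∑ k ∈ Finset.range (n+1), (k:ℝ) * bern n k y := by
        rw [← Finset.sum_add_distrib]; exact Finset.sum_congr rfl fun k _ => key k
    _ = (n:ℝ)*((n:ℝ)-1) * y^2 + n * y := by
        rw [h2]
        congr 1
        rw [← h1]
        refine Finset.sum_congr rfl fun k _ => ?_
        rw [← bern_eq_eval]
        linear_combination (-(bern n k y)) * (cast1 k)

lemma bern_nonneg (n k : ℕ) {y : ℝ} (hy0 : 0 ≤ y) (hy1 : y ≤ 1) : 0 ≤ bern n k y := by
  have h : (0:ℝ) ≤ 1 - y := by linarith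
  exact mul_nonneg (mul_nonneg (by positivity) (pow_nonneg hy0 _)) (pow_nonneg h _)

lemma integral_sq (a b y : ℝ) : (∫ t in a..b, (t - y)^2) = ((b-y)^3 - (a-y)^3)/3 := by
  have h := intervalIntegral.integral_comp_sub_right (a := a) (b := b) (fun t => t^2) y
  rw [h, integral_pow]
  norm_num

lemma M2_le (n : ℕ) (hn : 1 ≤ n) {y : ℝ} (hy0 : 0 ≤ y) (hy1 : y ≤ 1) :
    ∑ k ∈ Finset.range (n+1), bern n k y *
      (((n:ℝ)+1) * ∫ t in ((k:ℝ)/((n:ℝ)+1))..(((k:ℝ)+1)/((n:ℝ)+1)), (t-y)^2)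
      ≤ 1/(4*((n:ℝ)+1)) := by
  set N : ℝ := (n:ℝ)+1 with hNdef
  have hN : (0:ℝ) < N := by positivity
  have hn1 : (1:ℝ) ≤ (n:ℝ) := by exact_mod_cast hn
  have step1 : ∑ k ∈ Finset.range (n+1), bern n k y *
      (N * ∫ t in ((k:ℝ)/N)..(((k:ℝ)+1)/N), (t-y)^2)
      = ∑ k ∈ Finset.range (n+1),
        ((1/N^2)*((k:ℝ)^2 * bern n k y) + (1/N^2-2*y/N)*((k:ℝ) * bern n k y)
          + (y^2-y/N+1/(3*N^2)) * bern n k y) := by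
    refine Finset.sum_congr rfl fun k _ => ?_
    rw [integral_sq]
    field_simp
    ring
  rw [step1, Finset.sum_add_distrib, Finset.sum_add_distrib,
    ← Finset.mul_sum, ← Finset.mul_sum, ← Finset.mul_sum,
    bern_sum, bern_sum_k, bern_sum_k2 n hn]
  have key : ((n:ℝ)-1)*(y*(1-y)) + 1/3 ≤ N/4 := by
    nlinarith [sq_nonneg (1 - 2*y)]
  have expand : (1/N^2)*((n:ℝ)*((n:ℝ)-1) * y^2 + n * y) + (1/N^2-2*y/N)*((n:ℝ) * y)
      + (y^2-y/N+1/(3*N^2)) * 1 = (((n:ℝ)-1)*(y*(1-y)) + 1/3)/N^2 := by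
    have : (n:ℝ) = N - 1 := by rw [hNdef]; ring
    rw [this]
    field_simp
    ring
  rw [expand]
  calc (((n:ℝ)-1)*(y*(1-y)) + 1/3)/N^2 ≤ (N/4)/N^2 := by gcongr
    _ = 1/(4*N) := by field_simp

section omegaLemmas
variable {g : ℝ → ℝ} {M δ : ℝ}

lemma omega_bdd (hM : ∀ x ∈ Set.Icc (0:ℝ) 1, |g x| ≤ M) :
    BddAbove {v | ∃ x ∈ Set.Icc (0:ℝ) 1, ∃ t ∈ Set.Icc (0:ℝ) 1, |t - x| ≤ δ ∧ v = |g t - g x|} := by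
  refine ⟨2*M, ?_⟩
  rintro v ⟨x, hx, t, ht, -, rfl⟩
  have h1 := hM x hx
  have h2 := hM t ht
  calc |g t - g x| ≤ |g t| + |g x| := abs_sub _ _
    _ ≤ 2*M := by linarith

lemma omega_ge (hM : ∀ x ∈ Set.Icc (0:ℝ) 1, |g x| ≤ M)
    {x t : ℝ} (hx : x ∈ Set.Icc (0:ℝ) 1) (ht : t ∈ Set.Icc (0:ℝ) 1) (h : |t - x| ≤ δ) :
    |g t - g x| ≤ omegaMod g δ :=
  le_csSup (omega_bdd hM) ⟨x, hx, t, ht, h, rfl⟩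

lemma omega_nonneg (hM : ∀ x ∈ Set.Icc (0:ℝ) 1, |g x| ≤ M) (hδ : 0 ≤ δ) :
    0 ≤ omegaMod g δ := by
  have h := omega_ge (δ := δ) hM (x := 0) (t := 0) (by norm_num) (by norm_num) (by simpa)
  exact le_trans (by simp) h

lemma omega_telescope (hM : ∀ x ∈ Set.Icc (0:ℝ) 1, |g x| ≤ M) (hδ : 0 < δ)
    {x t : ℝ} (hx : x ∈ Set.Icc (0:ℝ) 1) (ht : t ∈ Set.Icc (0:ℝ) 1) :
    |g t - g x| ≤ (1 + |t - x|/δ) * omegaMod g δ := by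
  have hω := omega_nonneg (δ := δ) hM hδ.le
  by_cases hxt : t = x
  · subst hxt
    simp only [sub_self, abs_zero]
    positivity
  · have hu : 0 < |t - x| := by
      rw [abs_pos]; exact sub_ne_zero_of_ne hxt
    set m : ℕ := ⌈|t - x|/δ⌉₊ with hmdef
    have hm0 : 0 < m := Nat.ceil_pos.2 (by positivity)
    have hmR : (0:ℝ) < m := by exact_mod_cast hm0
    set p : ℕ → ℝ := fun i => x + (i:ℝ)*(t-x)/m with hpdef
    have hp0 : p 0 = x := by simp [hpdef]
    have hpm : p m = t := by
      simp only [hpdef]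
      field_simp
      ring
    have hpi : ∀ i, i ≤ m → p i ∈ Set.Icc (0:ℝ) 1 := by
      intro i hi
      have hc0 : (0:ℝ) ≤ (i:ℝ)/m := by positivity
      have hc1 : (i:ℝ)/m ≤ 1 := by
        rw [div_le_one hmR]; exact_mod_cast hi
      have hpi' : p i = (1 - (i:ℝ)/m)*x + ((i:ℝ)/m)*t := by
        simp only [hpdef]; field_simp; ring
      obtain ⟨hx0, hx1⟩ := hx
      obtain ⟨ht0, ht1⟩ := ht
      rw [hpi']
      constructor
      · nlinarith
      · nlinarith
    have hstep : ∀ i, |p (i+1) - p i| ≤ δ := by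
      intro i
      have : p (i+1) - p i = (t-x)/m := by
        simp only [hpdef]; push_cast; field_simp; ring
      rw [this, abs_div, abs_of_pos hmR, div_le_iff₀ hmR]
      have := Nat.le_ceil (|t - x|/δ)
      rw [← hmdef] at this
      calc |t - x| = (|t - x|/δ) * δ := by field_simp
        _ ≤ (m:ℝ) * δ := by gcongr
        _ = δ * m := mul_comm _ _
    have htel : g t - g x = ∑ i ∈ Finset.range m, (g (p (i+1)) - g (p i)) := by
      rw [Finset.sum_range_sub (fun i => g (p i)), hp0, hpm]
    calc |g t - g x| = |∑ i ∈ Finset.range m, (g (p (i+1)) - g (p i))| := by rw [htel]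
      _ ≤ ∑ i ∈ Finset.range m, |g (p (i+1)) - g (p i)| := Finset.abs_sum_le_sum_abs _ _
      _ ≤ ∑ i ∈ Finset.range m, omegaMod g δ := by
          refine Finset.sum_le_sum fun i hi => ?_
          have him : i + 1 ≤ m := Finset.mem_range.1 hi
          exact omega_ge hM (hpi i (by omega)) (hpi (i+1) him) (hstep i)
      _ = (m:ℝ) * omegaMod g δ := by rw [Finset.sum_const, Finset.card_range]; simp
      _ ≤ (1 + |t - x|/δ) * omegaMod g δ := by
          have : (m:ℝ) ≤ |t - x|/δ + 1 := by
            have := Nat.ceil_lt_add_one (by positivity : (0:ℝ) ≤ |t - x|/δ)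
            rw [← hmdef] at this
            linarith
          nlinarith

end omegaLemmas

lemma lnMu_pos {μ x : ℝ} (hμ : 0 < μ) (hx : 0 ≤ x) : 0 < lnMu μ x :=
  Real.log_pos (by linarith)

lemma lnMu_le {μ x : ℝ} (hμ : 0 < μ) (hx0 : 0 ≤ x) (hx : x ≤ 1) :
    lnMu μ x ≤ Real.log (2 + μ) := by
  unfold lnMu
  apply Real.log_le_log (by linarith)
  linarith

lemma aFun_mem {μ : ℝ} (hμ : 0 < μ) (n : ℕ) {x : ℝ} (hx : x ∈ Set.Icc (0:ℝ) 1) :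
    aFun μ n x ∈ Set.Icc (0:ℝ) 1 := by
  obtain ⟨hx0, hx1⟩ := hx
  have hc : (0:ℝ) < ((n : ℝ) + 1) * (1 + μ) := by positivity
  have hd : 0 < Real.log (1 + 1 / (((n : ℝ) + 1) * (1 + μ))) := by
    apply Real.log_pos
    have : 0 < 1 / (((n : ℝ) + 1) * (1 + μ)) := by positivity
    linarith
  constructor
  · apply div_nonneg _ hd.le
    apply Real.log_nonneg
    have : 0 ≤ x / (((n : ℝ) + 1) * (1 + μ)) := by positivity
    linarith
  · rw [aFun, div_le_one hd]
    have hxc : x / (((n : ℝ) + 1) * (1 + μ)) ≤ 1 / (((n : ℝ) + 1) * (1 + μ)) := by gcongr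
    apply Real.log_le_log
    · have : 0 ≤ x / (((n : ℝ) + 1) * (1 + μ)) := by positivity
      linarith
    · linarith

lemma le_gammaN {μ : ℝ} (hμ : 0 < μ) (n : ℕ) {x : ℝ} (hx : x ∈ Set.Icc (0:ℝ) 1) :
    |aFun μ n x - x| ≤ gammaN μ n := by
  have hbdd : BddAbove (Set.range fun z : Set.Icc (0:ℝ) 1 => |aFun μ n (z:ℝ) - (z:ℝ)|) := by
    refine ⟨2, ?_⟩
    rintro v ⟨z, rfl⟩
    have ha := aFun_mem hμ n z.2
    have hz := z.2
    obtain ⟨ha0, ha1⟩ := ha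
    obtain ⟨hz0, hz1⟩ := hz
    rw [abs_le]
    constructor <;> simp <;> linarith
  exact le_ciSup hbdd (⟨x, hx⟩ : Set.Icc (0:ℝ) 1)

lemma gammaN_nonneg {μ : ℝ} (hμ : 0 < μ) (n : ℕ) : 0 ≤ gammaN μ n :=
  (abs_nonneg _).trans (le_gammaN hμ n (by norm_num : (0:ℝ) ∈ Set.Icc (0:ℝ) 1))

set_option maxHeartbeats 2000000 in
theorem stmt15 (μ : ℝ) (hμ : 0 < μ) (n : ℕ) (hn : 1 < n) (f : ℝ → ℝ)
    (hf : ContinuousOn f (Set.Icc 0 1)) :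
    ∀ x ∈ Set.Icc (0:ℝ) 1,
      |LK μ n f x - f x| ≤
        omegaMod (fun t => f t / lnMu μ t) (1 / Real.sqrt ((n : ℝ) + 1)) *
            Real.log (2 + μ) *
            (1 + 1 / (2 * Real.sqrt ((n : ℝ) + 1)) + Real.sqrt 2) +
          omegaMod (fun t => f t / lnMu μ t) (gammaN μ n) * Real.log (2 + μ) := by
  intro x hx
  set g : ℝ → ℝ := fun t => f t / lnMu μ t with hgdef
  -- continuity of g on [0,1]
  have hlnC : ContinuousOn (fun t : ℝ => lnMu μ t) (Set.Icc 0 1) := by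
    apply ContinuousOn.log
    · fun_prop
    · intro t ht
      have h0 : (0:ℝ) ≤ t := ht.1
      exact ne_of_gt (by linarith)
  have hlnne : ∀ t ∈ Set.Icc (0:ℝ) 1, lnMu μ t ≠ 0 := fun t ht => (lnMu_pos hμ ht.1).ne'
  have hg : ContinuousOn g (Set.Icc 0 1) := hf.div hlnC hlnne
  obtain ⟨M, hM'⟩ := isCompact_Icc.exists_bound_of_continuousOn hg
  have hM : ∀ z ∈ Set.Icc (0:ℝ) 1, |g z| ≤ M := by
    intro z hz; simpa [Real.norm_eq_abs] using hM' z hz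
  -- basic quantities
  set s : ℝ := Real.sqrt ((n:ℝ) + 1) with hsdef
  have hspos : 0 < s := Real.sqrt_pos.2 (by positivity)
  have hs2 : s^2 = (n:ℝ)+1 := Real.sq_sqrt (by positivity)
  set δ : ℝ := 1 / s with hδdef
  have hδpos : 0 < δ := by positivity
  set ω1 : ℝ := omegaMod g δ with hω1def
  set ω2 : ℝ := omegaMod g (gammaN μ n) with hω2def
  have hω1 : 0 ≤ ω1 := omega_nonneg hM hδpos.le
  have hω2 : 0 ≤ ω2 := omega_nonneg hM (gammaN_nonneg hμ n)
  have hL : 0 < Real.log (2 + μ) := Real.log_pos (by linarith)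
  set y : ℝ := aFun μ n x with hydef
  have hy : y ∈ Set.Icc (0:ℝ) 1 := aFun_mem hμ n hx
  have hN : (0:ℝ) < (n:ℝ) + 1 := by positivity
  -- rewrite LK - f
  have hfx : f x = lnMu μ x * g x := by
    rw [hgdef]
    field_simp [hlnne x hx]
  set S : ℝ := ∑ k ∈ Finset.range (n + 1),
    bern n k y * (((n : ℝ) + 1) *
      ∫ t in ((k : ℝ) / ((n : ℝ) + 1))..(((k : ℝ) + 1) / ((n : ℝ) + 1)), g t) with hSdef
  have hLK : LK μ n f x = lnMu μ x * S := by
    rw [LK, hSdef]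
    congr 1
    refine Finset.sum_congr rfl fun k _ => ?_
    rw [hgdef]
    ring
  -- per-k bound
  have hkey : ∀ k ∈ Finset.range (n+1),
      |(((n:ℝ)+1) * ∫ t in ((k : ℝ) / ((n : ℝ) + 1))..(((k : ℝ) + 1) / ((n : ℝ) + 1)), g t) - g y|
      ≤ ω1 * (3/2) + ω1 * (((n:ℝ)+1)/2) *
          (((n:ℝ)+1) * ∫ t in ((k : ℝ) / ((n : ℝ) + 1))..(((k : ℝ) + 1) / ((n : ℝ) + 1)), (t-y)^2) := by
    intro k hk
    have hkn : k ≤ n := Nat.lt_succ_iff.1 (Finset.mem_range.1 hk)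
    set a : ℝ := (k : ℝ) / ((n : ℝ) + 1) with hadef
    set b : ℝ := ((k : ℝ) + 1) / ((n : ℝ) + 1) with hbdef
    have hab : a ≤ b := by
      rw [hadef, hbdef]
      gcongr
      linarith
    have ha0 : 0 ≤ a := by positivity
    have hb1 : b ≤ 1 := by
      rw [hbdef, div_le_one hN]
      have : (k:ℝ) ≤ (n:ℝ) := by exact_mod_cast hkn
      linarith
    have hsub : Set.Icc a b ⊆ Set.Icc (0:ℝ) 1 :=
      Set.Icc_subset_Icc ha0 hb1
    have hgi : IntervalIntegrable g volume a b := by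
      apply ContinuousOn.intervalIntegrable
      rw [Set.uIcc_of_le hab]
      exact hg.mono hsub
    have hba : b - a = 1/((n:ℝ)+1) := by
      rw [hadef, hbdef]; field_simp; ring
    -- pointwise bound
    have hbd : ∀ t ∈ Set.Icc a b,
        |g t - g y| ≤ ω1 * (3/2 + (((n:ℝ)+1)/2) * (t-y)^2) := by
      intro t ht
      have htI : t ∈ Set.Icc (0:ℝ) 1 := hsub ht
      have h1 : |g t - g y| ≤ (1 + |t - y|/δ) * ω1 :=
        omega_telescope hM hδpos hy htI
      have h2 : (1 + |t - y|/δ) * ω1 ≤ ω1 * (3/2 + (((n:ℝ)+1)/2) * (t-y)^2) := by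
        have hdivs : |t - y|/δ = |t - y| * s := by
          rw [hδdef]; field_simp
        rw [hdivs]
        have husq : (|t - y| * s)^2 = ((n:ℝ)+1)*(t-y)^2 := by
          rw [mul_pow, sq_abs, hs2]; ring
        have hw : |t - y| * s ≤ (((n:ℝ)+1)*(t-y)^2 + 1)/2 := by
          nlinarith [sq_nonneg (|t - y| * s - 1), husq]
        calc (1 + |t - y| * s)*ω1 ≤ (1 + (((n:ℝ)+1)*(t-y)^2 + 1)/2)*ω1 := by
              apply mul_le_mul_of_nonneg_right _ hω1; linarith
          _ = ω1 * (3/2 + (((n:ℝ)+1)/2) * (t-y)^2) := by ring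
      exact h1.trans h2
    -- the integral inequality
    have heq : (((n:ℝ)+1) * ∫ t in a..b, g t) - g y
        = ((n:ℝ)+1) * ∫ t in a..b, (g t - g y) := by
      rw [intervalIntegral.integral_sub hgi intervalIntegrable_const,
        intervalIntegral.integral_const, hba, smul_eq_mul]
      field_simp
    have hibd : |∫ t in a..b, (g t - g y)| ≤
        ∫ t in a..b, ω1 * (3/2 + (((n:ℝ)+1)/2) * (t-y)^2) := by
      have h1 : |∫ t in a..b, (g t - g y)| ≤ ∫ t in a..b, |g t - g y| :=
        intervalIntegral.abs_integral_le_integral_abs hab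
      have h2 : (∫ t in a..b, |g t - g y|) ≤
          ∫ t in a..b, ω1 * (3/2 + (((n:ℝ)+1)/2) * (t-y)^2) := by
        apply intervalIntegral.integral_mono_on hab
        · exact (hgi.sub intervalIntegrable_const).abs
        · apply Continuous.intervalIntegrable
          fun_prop
        · exact hbd
      exact h1.trans h2
    have hval : (∫ t in a..b, ω1 * (3/2 + (((n:ℝ)+1)/2) * (t-y)^2))
        = ω1 * (3/2 * (b - a) + (((n:ℝ)+1)/2) * ∫ t in a..b, (t-y)^2) := by
      rw [intervalIntegral.integral_const_mul]
      congr 1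
      rw [intervalIntegral.integral_add intervalIntegrable_const
        (Continuous.intervalIntegrable (by fun_prop) _ _),
        intervalIntegral.integral_const, intervalIntegral.integral_const_mul, smul_eq_mul]
      ring
    calc |(((n:ℝ)+1) * ∫ t in a..b, g t) - g y|
        = ((n:ℝ)+1) * |∫ t in a..b, (g t - g y)| := by
          rw [heq, abs_mul, abs_of_pos hN]
      _ ≤ ((n:ℝ)+1) * (ω1 * (3/2 * (b - a) + (((n:ℝ)+1)/2) * ∫ t in a..b, (t-y)^2)) := by
          rw [← hval]
          exact mul_le_mul_of_nonneg_left hibd hN.le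
      _ = ω1 * (3/2) + ω1 * (((n:ℝ)+1)/2) * (((n:ℝ)+1) * ∫ t in a..b, (t-y)^2) := by
          rw [hba]
          field_simp
  -- sum bound
  have hSy : |S - g y| ≤ ω1 * (13/8) := by
    have hsplit : S - g y = ∑ k ∈ Finset.range (n+1),
        bern n k y * ((((n:ℝ)+1) *
          ∫ t in ((k : ℝ) / ((n : ℝ) + 1))..(((k : ℝ) + 1) / ((n : ℝ) + 1)), g t) - g y) := by
      rw [hSdef]
      rw [Finset.sum_congr rfl (fun k _ => mul_sub (bern n k y) _ (g y)),
        Finset.sum_sub_distrib, ← Finset.sum_mul, bern_sum]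
      ring
    have habs : |S - g y| ≤ ∑ k ∈ Finset.range (n+1),
        bern n k y * (ω1 * (3/2) + ω1 * (((n:ℝ)+1)/2) *
          (((n:ℝ)+1) * ∫ t in ((k : ℝ) / ((n : ℝ) + 1))..(((k : ℝ) + 1) / ((n : ℝ) + 1)), (t-y)^2)) := by
      rw [hsplit]
      refine (Finset.abs_sum_le_sum_abs _ _).trans (Finset.sum_le_sum fun k hk => ?_)
      rw [abs_mul, abs_of_nonneg (bern_nonneg n k hy.1 hy.2)]
      exact mul_le_mul_of_nonneg_left (hkey k hk) (bern_nonneg n k hy.1 hy.2)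
    have hfin : ∑ k ∈ Finset.range (n+1),
        bern n k y * (ω1 * (3/2) + ω1 * (((n:ℝ)+1)/2) *
          (((n:ℝ)+1) * ∫ t in ((k : ℝ) / ((n : ℝ) + 1))..(((k : ℝ) + 1) / ((n : ℝ) + 1)), (t-y)^2))
        ≤ ω1 * (13/8) := by
      have hexp : ∑ k ∈ Finset.range (n+1),
          bern n k y * (ω1 * (3/2) + ω1 * (((n:ℝ)+1)/2) *
            (((n:ℝ)+1) * ∫ t in ((k : ℝ) / ((n : ℝ) + 1))..(((k : ℝ) + 1) / ((n : ℝ) + 1)), (t-y)^2))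
          = ω1 * (3/2) * (∑ k ∈ Finset.range (n+1), bern n k y)
            + ω1 * (((n:ℝ)+1)/2) * ∑ k ∈ Finset.range (n+1), bern n k y *
              (((n:ℝ)+1) * ∫ t in ((k : ℝ) / ((n : ℝ) + 1))..(((k : ℝ) + 1) / ((n : ℝ) + 1)), (t-y)^2) := by
        rw [Finset.mul_sum, Finset.mul_sum, ← Finset.sum_add_distrib]
        exact Finset.sum_congr rfl fun k _ => by ring
      rw [hexp, bern_sum]
      have hM2 := M2_le n hn.le hy.1 hy.2
      have h2 : ω1 * (((n:ℝ)+1)/2) * ∑ k ∈ Finset.range (n+1), bern n k y *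
          (((n:ℝ)+1) * ∫ t in ((k : ℝ) / ((n : ℝ) + 1))..(((k : ℝ) + 1) / ((n : ℝ) + 1)), (t-y)^2)
          ≤ ω1 * (((n:ℝ)+1)/2) * (1/(4*((n:ℝ)+1))) := by
        apply mul_le_mul_of_nonneg_left hM2
        positivity
      have h3 : ω1 * (((n:ℝ)+1)/2) * (1/(4*((n:ℝ)+1))) = ω1/8 := by
        field_simp
        ring
      rw [h3] at h2
      linarith
    exact habs.trans hfin
  -- combine
  have hgy : |g y - g x| ≤ ω2 := omega_ge hM hx hy (le_gammaN hμ n hx)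
  have hlnpos : 0 < lnMu μ x := lnMu_pos hμ hx.1
  have hlnle : lnMu μ x ≤ Real.log (2 + μ) := lnMu_le hμ hx.1 hx.2
  have hmain : |LK μ n f x - f x| ≤ Real.log (2 + μ) * (ω1 * (13/8) + ω2) := by
    rw [hLK, hfx, ← mul_sub, abs_mul, abs_of_pos hlnpos]
    have h1 : |S - g x| ≤ ω1 * (13/8) + ω2 := by
      calc |S - g x| = |(S - g y) + (g y - g x)| := by ring_nf
        _ ≤ |S - g y| + |g y - g x| := abs_add_le _ _
        _ ≤ ω1 * (13/8) + ω2 := add_le_add hSy hgy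
    exact mul_le_mul hlnle h1 (abs_nonneg _) hL.le
  refine hmain.trans ?_
  have hsqrt2 : (5/8 : ℝ) ≤ Real.sqrt 2 := by
    nlinarith [Real.sq_sqrt (by norm_num : (0:ℝ) ≤ 2), Real.sqrt_nonneg 2]
  have hc : (13/8 : ℝ) ≤ 1 + 1 / (2 * s) + Real.sqrt 2 := by
    have : 0 ≤ 1 / (2 * s) := by positivity
    linarith
  have key : Real.log (2 + μ) * (ω1 * (13/8) + ω2)
      = ω1 * Real.log (2 + μ) * (13/8) + ω2 * Real.log (2 + μ) := by ring
  rw [key]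
  have h1 : ω1 * Real.log (2 + μ) * (13/8) ≤ ω1 * Real.log (2 + μ) * (1 + 1 / (2 * s) + Real.sqrt 2) := by
    apply mul_le_mul_of_nonneg_left hc
    positivity
  linarith
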